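/- Let φ : {(a,b) ∈ [0,1]² : a ≤ b} × [-1,1] → ℝ be continuous with φ((a,a), y) = y for all a ∈ [0,1] and y ∈ [-1,1]. Fix a segment I = [a,b] ⊆ [0,1] and distinct affine functions ℓ₁,…,ℓ_p determining the pieces Iᵢ(ξ) of I. Then the map (ξ, y) ↦ (φ(I₁(ξ), y), …, φ(I_p(ξ), y)) is continuous in the configuration ξ of pairwise distinct affine functions and in y. -/

import Mathlib

open Set Filter Topology

/-- The `i`-th piece of the partition of `[a,b]` induced by the configuration `ξ`
of affine functions: the set where the `i`-th affine function is minimal. -/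
def pieceSet (p : ℕ) (ξ : Fin p → ℝ × ℝ) (a b : ℝ) (i : Fin p) : Set ℝ :=
  {x ∈ Icc a b | ∀ j, j ≠ i → (ξ i).1 * x + (ξ i).2 ≤ (ξ j).1 * x + (ξ j).2}

/-- The `i`-th piece regarded as an element of the segment space (a pair of endpoints);
an empty piece is sent to a degenerate segment. -/
noncomputable def pieceSeg (p : ℕ) (ξ : Fin p → ℝ × ℝ) (a b : ℝ) (i : Fin p) : ℝ × ℝ :=
  (sInf (pieceSet p ξ a b i), sSup (pieceSet p ξ a b i))

namespace Stmt10Aux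

variable {p : ℕ} {a b : ℝ}

lemma bddBelow_pieceSet (ξ : Fin p → ℝ × ℝ) (i : Fin p) : BddBelow (pieceSet p ξ a b i) :=
  ⟨a, fun _ hx => hx.1.1⟩

lemma bddAbove_pieceSet (ξ : Fin p → ℝ × ℝ) (i : Fin p) : BddAbove (pieceSet p ξ a b i) :=
  ⟨b, fun _ hx => hx.1.2⟩

lemma isClosed_pieceSet (ξ : Fin p → ℝ × ℝ) (i : Fin p) : IsClosed (pieceSet p ξ a b i) := by
  have h : pieceSet p ξ a b i =
      Icc a b ∩ ⋂ j, {x : ℝ | j ≠ i → (ξ i).1 * x + (ξ i).2 ≤ (ξ j).1 * x + (ξ j).2} := by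
    ext x
    simp only [pieceSet, Set.mem_setOf_eq, Set.mem_inter_iff, Set.mem_iInter]
  rw [h]
  refine isClosed_Icc.inter (isClosed_iInter fun j => ?_)
  by_cases hj : j = i
  · simp [hj]
  · have h2 : {x : ℝ | j ≠ i → (ξ i).1 * x + (ξ i).2 ≤ (ξ j).1 * x + (ξ j).2} =
        {x : ℝ | (ξ i).1 * x + (ξ i).2 ≤ (ξ j).1 * x + (ξ j).2} := by
      ext x; simp [hj]
    rw [h2]
    exact isClosed_le (by continuity) (by continuity)

lemma sInf_mem_pieceSet (ξ : Fin p → ℝ × ℝ) (i : Fin p) (h : (pieceSet p ξ a b i).Nonempty) :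
    sInf (pieceSet p ξ a b i) ∈ pieceSet p ξ a b i :=
  (isClosed_pieceSet ξ i).csInf_mem h (bddBelow_pieceSet ξ i)

lemma sSup_mem_pieceSet (ξ : Fin p → ℝ × ℝ) (i : Fin p) (h : (pieceSet p ξ a b i).Nonempty) :
    sSup (pieceSet p ξ a b i) ∈ pieceSet p ξ a b i :=
  (isClosed_pieceSet ξ i).csSup_mem h (bddAbove_pieceSet ξ i)

/-- Upper semicontinuity of the piece in the configuration. -/
lemma usc (ξ₀ : Fin p → ℝ × ℝ) (i : Fin p) (V : Set ℝ) (hV : IsOpen V)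
    (hSV : pieceSet p ξ₀ a b i ⊆ V) :
    ∀ᶠ ξ in 𝓝 ξ₀, pieceSet p ξ a b i ⊆ V := by
  have hK : IsCompact (Icc a b \ V) := isCompact_Icc.diff hV
  have hP : ∀ x ∈ Icc a b \ V, ∀ᶠ z : (Fin p → ℝ × ℝ) × ℝ in 𝓝 (ξ₀, x),
      ∃ j, j ≠ i ∧ (z.1 j).1 * z.2 + (z.1 j).2 < (z.1 i).1 * z.2 + (z.1 i).2 := by
    intro x hx
    have hx0 : ∃ j, j ≠ i ∧ (ξ₀ j).1 * x + (ξ₀ j).2 < (ξ₀ i).1 * x + (ξ₀ i).2 := by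
      by_contra h
      push_neg at h
      exact hx.2 (hSV ⟨hx.1, fun j hj => h j hj⟩)
    obtain ⟨j, hj, hlt⟩ := hx0
    have hc1 : Continuous (fun z : (Fin p → ℝ × ℝ) × ℝ => (z.1 j).1 * z.2 + (z.1 j).2) := by
      have := (continuous_apply j).comp (continuous_fst :
        Continuous fun z : (Fin p → ℝ × ℝ) × ℝ => z.1)
      exact ((this.fst.mul continuous_snd).add this.snd)
    have hc2 : Continuous (fun z : (Fin p → ℝ × ℝ) × ℝ => (z.1 i).1 * z.2 + (z.1 i).2) := by
      have := (continuous_apply i).comp (continuous_fst :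
        Continuous fun z : (Fin p → ℝ × ℝ) × ℝ => z.1)
      exact ((this.fst.mul continuous_snd).add this.snd)
    have hopen : IsOpen {z : (Fin p → ℝ × ℝ) × ℝ |
        (z.1 j).1 * z.2 + (z.1 j).2 < (z.1 i).1 * z.2 + (z.1 i).2} := isOpen_lt hc1 hc2
    filter_upwards [hopen.mem_nhds hlt] with z hz using ⟨j, hj, hz⟩
  have hev := hK.eventually_forall_of_forall_eventually (P := fun (ξ : Fin p → ℝ × ℝ) (x : ℝ) => ∃ j, j ≠ i ∧ (ξ j).1 * x + (ξ j).2 < (ξ i).1 * x + (ξ i).2) hP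
  filter_upwards [hev] with ξ hξ x hxS
  by_contra hxV
  obtain ⟨j, hj, hlt⟩ := hξ x ⟨hxS.1, hxV⟩
  exact absurd (hxS.2 j hj) (not_le.2 hlt)

/-- Lower semicontinuity: a point in the strict interior of the piece stays in it. -/
lemma lsc (ξ₀ : Fin p → ℝ × ℝ) (i : Fin p) (x : ℝ) (hx : x ∈ Icc a b)
    (hstrict : ∀ j, j ≠ i → (ξ₀ i).1 * x + (ξ₀ i).2 < (ξ₀ j).1 * x + (ξ₀ j).2) :
    ∀ᶠ ξ in 𝓝 ξ₀, x ∈ pieceSet p ξ a b i := by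
  have h : ∀ j, ∀ᶠ ξ in 𝓝 ξ₀, j ≠ i → (ξ i).1 * x + (ξ i).2 ≤ (ξ j).1 * x + (ξ j).2 := by
    intro j
    by_cases hj : j = i
    · filter_upwards with ξ h; exact absurd h (by simp [hj])
    · have hc1 : Continuous (fun ξ : Fin p → ℝ × ℝ => (ξ i).1 * x + (ξ i).2) := by
        have := (continuous_apply i : Continuous fun ξ : Fin p → ℝ × ℝ => ξ i)
        exact ((this.fst.mul continuous_const).add this.snd)
      have hc2 : Continuous (fun ξ : Fin p → ℝ × ℝ => (ξ j).1 * x + (ξ j).2) := by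
        have := (continuous_apply j : Continuous fun ξ : Fin p → ℝ × ℝ => ξ j)
        exact ((this.fst.mul continuous_const).add this.snd)
      have hopen : IsOpen {ξ : Fin p → ℝ × ℝ |
          (ξ i).1 * x + (ξ i).2 < (ξ j).1 * x + (ξ j).2} := isOpen_lt hc1 hc2
      filter_upwards [hopen.mem_nhds (hstrict j hj)] with ξ hξ _ using le_of_lt hξ
  filter_upwards [eventually_all.2 h] with ξ hξ using ⟨hx, hξ⟩

/-- In a nondegenerate piece one can find points where all the other affine functions are
strictly larger, arbitrarily close to either endpoint. -/
lemma exists_strict (ξ₀ : Fin p → ℝ × ℝ) (hinj : Function.Injective ξ₀) (i : Fin p)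
    (hne : (pieceSet p ξ₀ a b i).Nonempty) {l r : ℝ}
    (hl : sInf (pieceSet p ξ₀ a b i) ≤ l) (hr : r ≤ sSup (pieceSet p ξ₀ a b i))
    (hlr : l < r) :
    ∃ z, l < z ∧ z < r ∧ z ∈ Icc a b ∧
      ∀ j, j ≠ i → (ξ₀ i).1 * z + (ξ₀ i).2 < (ξ₀ j).1 * z + (ξ₀ j).2 := by
  have hu := sInf_mem_pieceSet ξ₀ i hne
  have hv := sSup_mem_pieceSet ξ₀ i hne
  set T : Set ℝ := Set.range (fun j : Fin p => ((ξ₀ i).2 - (ξ₀ j).2) / ((ξ₀ j).1 - (ξ₀ i).1))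
    with hT_def
  have hT : T.Finite := Set.finite_range _
  obtain ⟨z, hzIoo, hzT⟩ := ((Set.Ioo_infinite hlr).diff hT).nonempty
  obtain ⟨hz1, hz2⟩ := hzIoo
  have hzu : sInf (pieceSet p ξ₀ a b i) ≤ z := le_of_lt (lt_of_le_of_lt hl hz1)
  have hzv : z ≤ sSup (pieceSet p ξ₀ a b i) := le_of_lt (lt_of_lt_of_le hz2 hr)
  have hzIcc : z ∈ Icc a b := ⟨le_trans hu.1.1 hzu, le_trans hzv hv.1.2⟩
  refine ⟨z, hz1, hz2, hzIcc, fun j hj => ?_⟩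
  have hiu := hu.2 j hj
  have hiv := hv.2 j hj
  set d := (ξ₀ j).1 - (ξ₀ i).1 with hd_def
  set e := (ξ₀ j).2 - (ξ₀ i).2 with he_def
  have h1 : 0 ≤ d * sInf (pieceSet p ξ₀ a b i) + e := by
    rw [hd_def, he_def]; nlinarith
  have h2 : 0 ≤ d * sSup (pieceSet p ξ₀ a b i) + e := by
    rw [hd_def, he_def]; nlinarith
  have hgoal : 0 < d * z + e := by
    rcases eq_or_ne d 0 with hd | hd
    · have he : e ≠ 0 := by
        intro he
        apply hj
        apply hinj
        have h1' : (ξ₀ j).1 = (ξ₀ i).1 := by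
          have := hd; rw [hd_def, sub_eq_zero] at this; exact this
        have h2' : (ξ₀ j).2 = (ξ₀ i).2 := by
          have := he; rw [he_def, sub_eq_zero] at this; exact this
        exact Prod.ext h1' h2'
      rw [hd, zero_mul, zero_add]
      rcases lt_or_gt_of_ne he with h | h
      · exfalso; rw [hd, zero_mul, zero_add] at h1; linarith
      · exact h
    · have hz0 : d * z + e ≠ 0 := by
        intro h0
        apply hzT
        refine ⟨j, ?_⟩
        show ((ξ₀ i).2 - (ξ₀ j).2) / ((ξ₀ j).1 - (ξ₀ i).1) = z
        have hd' : (ξ₀ j).1 - (ξ₀ i).1 ≠ 0 := by rw [← hd_def]; exact hd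
        rw [hd_def, he_def] at h0
        field_simp
        linarith
      rcases lt_trichotomy d 0 with h | h | h
      · have : d * sSup (pieceSet p ξ₀ a b i) ≤ d * z := by nlinarith
        rcases lt_or_eq_of_le (by linarith : (0:ℝ) ≤ d * z + e) with h' | h'
        · exact h'
        · exact absurd h'.symm hz0
      · exact absurd h hd
      · have : d * sInf (pieceSet p ξ₀ a b i) ≤ d * z := by nlinarith
        rcases lt_or_eq_of_le (by linarith : (0:ℝ) ≤ d * z + e) with h' | h'
        · exact h'
        · exact absurd h'.symm hz0
  rw [hd_def, he_def] at hgoal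
  nlinarith

lemma tendsto_sInf (ξ₀ : Fin p → ℝ × ℝ) (hinj : Function.Injective ξ₀) (i : Fin p)
    (hne : (pieceSet p ξ₀ a b i).Nonempty)
    (hlt : sInf (pieceSet p ξ₀ a b i) < sSup (pieceSet p ξ₀ a b i)) :
    Tendsto (fun ξ => sInf (pieceSet p ξ a b i)) (𝓝 ξ₀) (𝓝 (sInf (pieceSet p ξ₀ a b i))) := by
  set u₀ := sInf (pieceSet p ξ₀ a b i) with hu₀
  set v₀ := sSup (pieceSet p ξ₀ a b i) with hv₀
  rw [tendsto_order]
  constructor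
  · intro l hl
    set l' := (l + u₀) / 2 with hl'
    have hll' : l < l' := by rw [hl']; linarith
    have hl'u : l' < u₀ := by rw [hl']; linarith
    have hSV : pieceSet p ξ₀ a b i ⊆ Ioi l' := fun x hx =>
      lt_of_lt_of_le hl'u (csInf_le (bddBelow_pieceSet ξ₀ i) hx)
    obtain ⟨z, hz1, hz2, hzIcc, hzs⟩ := exists_strict ξ₀ hinj i hne le_rfl le_rfl hlt
    filter_upwards [usc ξ₀ i _ isOpen_Ioi hSV, lsc ξ₀ i z hzIcc hzs] with ξ h1 h2
    have hne' : (pieceSet p ξ a b i).Nonempty := ⟨z, h2⟩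
    have : l' ≤ sInf (pieceSet p ξ a b i) :=
      le_csInf hne' fun x hx => le_of_lt (h1 hx)
    linarith
  · intro r hr
    have hlr : u₀ < min r v₀ := lt_min hr hlt
    obtain ⟨z, hz1, hz2, hzIcc, hzs⟩ := exists_strict ξ₀ hinj i hne le_rfl
      (min_le_right r v₀) hlr
    filter_upwards [lsc ξ₀ i z hzIcc hzs] with ξ h2
    have : sInf (pieceSet p ξ a b i) ≤ z := csInf_le (bddBelow_pieceSet ξ i) h2
    exact lt_of_le_of_lt this (lt_of_lt_of_le hz2 (min_le_left r v₀))

lemma tendsto_sSup (ξ₀ : Fin p → ℝ × ℝ) (hinj : Function.Injective ξ₀) (i : Fin p)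
    (hne : (pieceSet p ξ₀ a b i).Nonempty)
    (hlt : sInf (pieceSet p ξ₀ a b i) < sSup (pieceSet p ξ₀ a b i)) :
    Tendsto (fun ξ => sSup (pieceSet p ξ a b i)) (𝓝 ξ₀) (𝓝 (sSup (pieceSet p ξ₀ a b i))) := by
  set u₀ := sInf (pieceSet p ξ₀ a b i) with hu₀
  set v₀ := sSup (pieceSet p ξ₀ a b i) with hv₀
  rw [tendsto_order]
  constructor
  · intro l hl
    have hlr : max l u₀ < v₀ := max_lt hl hlt
    obtain ⟨z, hz1, hz2, hzIcc, hzs⟩ := exists_strict ξ₀ hinj i hne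
      (le_max_right l u₀) le_rfl hlr
    filter_upwards [lsc ξ₀ i z hzIcc hzs] with ξ h2
    have : z ≤ sSup (pieceSet p ξ a b i) := le_csSup (bddAbove_pieceSet ξ i) h2
    exact lt_of_lt_of_le (lt_of_le_of_lt (le_max_left l u₀) hz1) this
  · intro r hr
    set r' := (v₀ + r) / 2 with hr'
    have hvr' : v₀ < r' := by rw [hr']; linarith
    have hr'r : r' < r := by rw [hr']; linarith
    have hSV : pieceSet p ξ₀ a b i ⊆ Iio r' := fun x hx =>
      lt_of_le_of_lt (le_csSup (bddAbove_pieceSet ξ₀ i) hx) hvr'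
    obtain ⟨z, hz1, hz2, hzIcc, hzs⟩ := exists_strict ξ₀ hinj i hne le_rfl le_rfl hlt
    filter_upwards [usc ξ₀ i _ isOpen_Iio hSV, lsc ξ₀ i z hzIcc hzs] with ξ h1 h2
    have hne' : (pieceSet p ξ a b i).Nonempty := ⟨z, h2⟩
    have : sSup (pieceSet p ξ a b i) ≤ r' :=
      csSup_le hne' fun x hx => le_of_lt (h1 hx)
    linarith

lemma isCompactD : IsCompact (({q : ℝ × ℝ | 0 ≤ q.1 ∧ q.1 ≤ q.2 ∧ q.2 ≤ 1}) ×ˢ Icc (-1:ℝ) 1) := by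
  refine IsCompact.prod ?_ isCompact_Icc
  refine IsCompact.of_isClosed_subset ((isCompact_Icc (a := (0:ℝ)) (b := 1)).prod
    (isCompact_Icc (a := (0:ℝ)) (b := 1))) ?_ ?_
  · exact (isClosed_le continuous_const continuous_fst).inter
      ((isClosed_le continuous_fst continuous_snd).inter
        (isClosed_le continuous_snd continuous_const))
  · rintro ⟨x, y⟩ ⟨h1, h2, h3⟩
    exact ⟨⟨h1, h2.trans h3⟩, ⟨h1.trans h2, h3⟩⟩

end Stmt10Aux

open Stmt10Aux in
theorem stmt_10 (p : ℕ) (hp : 0 < p)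
    (φ : (ℝ × ℝ) × ℝ → ℝ)
    (hφ : ContinuousOn φ
      ({q : ℝ × ℝ | 0 ≤ q.1 ∧ q.1 ≤ q.2 ∧ q.2 ≤ 1} ×ˢ Icc (-1:ℝ) 1))
    (hdeg : ∀ a ∈ Icc (0:ℝ) 1, ∀ y ∈ Icc (-1:ℝ) 1, φ ((a, a), y) = y)
    (a b : ℝ) (h0 : 0 ≤ a) (hab : a ≤ b) (h1 : b ≤ 1) :
    ContinuousOn
      (fun q : (Fin p → ℝ × ℝ) × ℝ => fun i : Fin p => φ (pieceSeg p q.1 a b i, q.2))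
      ({ξ : Fin p → ℝ × ℝ | Function.Injective ξ} ×ˢ Icc (-1:ℝ) 1) := by
  set s : Set ((Fin p → ℝ × ℝ) × ℝ) := {ξ : Fin p → ℝ × ℝ | Function.Injective ξ} ×ˢ Icc (-1:ℝ) 1 with hs_def
  set D : Set ((ℝ × ℝ) × ℝ) := {q : ℝ × ℝ | 0 ≤ q.1 ∧ q.1 ≤ q.2 ∧ q.2 ≤ 1} ×ˢ Icc (-1:ℝ) 1 with hD_def
  intro q hq
  have hinj : Function.Injective q.1 := hq.1
  have hy : q.2 ∈ Icc (-1:ℝ) 1 := hq.2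
  rw [continuousWithinAt_pi]
  intro i
  set ξ₀ := q.1 with hξ₀
  set y₀ := q.2 with hy₀
  set S₀ := pieceSet p ξ₀ a b i with hS₀
  have hfst : Tendsto (fun q' : (Fin p → ℝ × ℝ) × ℝ => q'.1) (𝓝[s] q) (𝓝 ξ₀) :=
    (continuous_fst.tendsto q).mono_left nhdsWithin_le_nhds
  have hsnd : Tendsto (fun q' : (Fin p → ℝ × ℝ) × ℝ => q'.2) (𝓝[s] q) (𝓝 y₀) :=
    (continuous_snd.tendsto q).mono_left nhdsWithin_le_nhds
  by_cases hcase : S₀.Nonempty ∧ sInf S₀ < sSup S₀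
  · obtain ⟨hne, hlt⟩ := hcase
    have hu := sInf_mem_pieceSet ξ₀ i hne
    have hv := sSup_mem_pieceSet ξ₀ i hne
    have hmem : ((sInf S₀, sSup S₀), y₀) ∈ D :=
      ⟨⟨h0.trans hu.1.1, hlt.le, hv.1.2.trans h1⟩, hy⟩
    have hseg : Tendsto (fun ξ => pieceSeg p ξ a b i) (𝓝 ξ₀) (𝓝 (sInf S₀, sSup S₀)) :=
      (tendsto_sInf ξ₀ hinj i hne hlt).prodMk_nhds (tendsto_sSup ξ₀ hinj i hne hlt)
    have hne_ev : ∀ᶠ ξ in 𝓝 ξ₀, (pieceSet p ξ a b i).Nonempty := by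
      obtain ⟨z, _, _, hzIcc, hzs⟩ := exists_strict ξ₀ hinj i hne le_rfl le_rfl hlt
      filter_upwards [lsc ξ₀ i z hzIcc hzs] with ξ h using ⟨z, h⟩
    have hg : Tendsto (fun q' : (Fin p → ℝ × ℝ) × ℝ => (pieceSeg p q'.1 a b i, q'.2))
        (𝓝[s] q) (𝓝[D] ((sInf S₀, sSup S₀), y₀)) := by
      rw [tendsto_nhdsWithin_iff]
      constructor
      · exact (hseg.comp hfst).prodMk_nhds hsnd
      · filter_upwards [hfst.eventually hne_ev, self_mem_nhdsWithin] with q' hq1 hq2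
        have hu' := sInf_mem_pieceSet q'.1 i hq1
        have hv' := sSup_mem_pieceSet q'.1 i hq1
        refine ⟨⟨h0.trans hu'.1.1, ?_, hv'.1.2.trans h1⟩, hq2.2⟩
        exact csInf_le_csSup hq1 (bddBelow_pieceSet q'.1 i) (bddAbove_pieceSet q'.1 i)
    exact Filter.Tendsto.comp (hφ _ hmem) hg
  · have hbl := bddBelow_pieceSet (a := a) (b := b) ξ₀ i
    have hba := bddAbove_pieceSet (a := a) (b := b) ξ₀ i
    have hval : φ (pieceSeg p ξ₀ a b i, y₀) = y₀ := by
      rcases eq_empty_or_nonempty S₀ with hS | hS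
      · have hseg0 : pieceSeg p ξ₀ a b i = (0, 0) := by
          rw [pieceSeg, ← hS₀, hS, Real.sInf_empty, Real.sSup_empty]
        rw [hseg0]
        exact hdeg 0 (by norm_num) y₀ hy
      · have heq : sInf S₀ = sSup S₀ := by
          have h1' := csInf_le_csSup hS hbl hba
          have h2' : ¬ sInf S₀ < sSup S₀ := fun h => hcase ⟨hS, h⟩
          exact le_antisymm h1' (not_lt.1 h2')
        have hu := sInf_mem_pieceSet ξ₀ i hS
        have hseg0 : pieceSeg p ξ₀ a b i = (sInf S₀, sInf S₀) := by
          rw [pieceSeg, ← hS₀, ← heq]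
        rw [hseg0]
        exact hdeg _ ⟨h0.trans hu.1.1, hu.1.2.trans h1⟩ y₀ hy
    show Tendsto (fun q' : (Fin p → ℝ × ℝ) × ℝ => φ (pieceSeg p q'.1 a b i, q'.2))
      (𝓝[s] q) (𝓝 (φ (pieceSeg p ξ₀ a b i, y₀)))
    rw [hval, Metric.tendsto_nhds]
    intro ε hε
    obtain ⟨δ, hδ, hunif⟩ := Metric.uniformContinuousOn_iff.1
      (isCompactD.uniformContinuousOn_of_continuous hφ) (ε/2) (half_pos hε)
    set c := sInf S₀ with hc
    have hVsub : S₀ ⊆ Ioo (c - δ/2) (c + δ/2) := by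
      intro x hx
      have hx1 : c ≤ x := csInf_le hbl hx
      have hx2 : x ≤ sSup S₀ := le_csSup hba hx
      have hx3 : sSup S₀ ≤ c := by
        have h2' : ¬ sInf S₀ < sSup S₀ := fun h => hcase ⟨⟨x, hx⟩, h⟩
        exact not_lt.1 h2'
      constructor <;> simp only [hc] <;> linarith
    have hev := usc ξ₀ i _ isOpen_Ioo hVsub
    filter_upwards [hfst.eventually hev, self_mem_nhdsWithin,
      hsnd (Metric.ball_mem_nhds y₀ (half_pos hε))] with q' hq1 hq2 hq3
    have hy' : q'.2 ∈ Icc (-1:ℝ) 1 := hq2.2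
    have hq3' : dist q'.2 y₀ < ε/2 := by simpa [Metric.mem_ball] using hq3
    rcases eq_empty_or_nonempty (pieceSet p q'.1 a b i) with hS' | hS'
    · have hseg' : pieceSeg p q'.1 a b i = (0, 0) := by
        rw [pieceSeg, hS', Real.sInf_empty, Real.sSup_empty]
      rw [hseg', hdeg 0 (by norm_num) q'.2 hy']
      linarith [hq3', dist_nonneg (x := q'.2) (y := y₀)]
    · set u := sInf (pieceSet p q'.1 a b i) with hu_def
      set v := sSup (pieceSet p q'.1 a b i) with hv_def
      have hu' := sInf_mem_pieceSet q'.1 i hS'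
      have hv' := sSup_mem_pieceSet q'.1 i hS'
      have huv : u ≤ v := csInf_le_csSup hS' (bddBelow_pieceSet q'.1 i) (bddAbove_pieceSet q'.1 i)
      have huIoo := hq1 hu'
      have hvIoo := hq1 hv'
      have hP1 : ((u, v), q'.2) ∈ D := ⟨⟨h0.trans hu'.1.1, huv, hv'.1.2.trans h1⟩, hy'⟩
      have hP2 : ((u, u), q'.2) ∈ D := ⟨⟨h0.trans hu'.1.1, le_refl u, hu'.1.2.trans h1⟩, hy'⟩
      have hvu : |v - u| < δ := by
        rw [abs_of_nonneg (by linarith)]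
        rcases huIoo with ⟨hA, hB⟩
        rcases hvIoo with ⟨hC, hD2⟩
        linarith
      have hdist : dist (((u, v), q'.2) : (ℝ × ℝ) × ℝ) (((u, u), q'.2) : (ℝ × ℝ) × ℝ) < δ := by
        have heq : dist (((u, v), q'.2) : (ℝ × ℝ) × ℝ) (((u, u), q'.2) : (ℝ × ℝ) × ℝ)
            = |v - u| := by
          rw [Prod.dist_eq, dist_self, max_eq_left dist_nonneg, Prod.dist_eq, dist_self,
            max_eq_right dist_nonneg, Real.dist_eq]
        rw [heq]
        exact hvu
      have hkey := hunif _ hP1 _ hP2 hdist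
      have hval2 : φ ((u, u), q'.2) = q'.2 :=
        hdeg u ⟨h0.trans hu'.1.1, hu'.1.2.trans h1⟩ q'.2 hy'
      have hseg' : pieceSeg p q'.1 a b i = (u, v) := rfl
      rw [hseg']
      calc dist (φ ((u, v), q'.2)) y₀
          ≤ dist (φ ((u, v), q'.2)) (φ ((u, u), q'.2)) + dist (φ ((u, u), q'.2)) y₀ :=
            dist_triangle _ _ _
        _ < ε/2 + ε/2 := by
            refine add_lt_add_of_lt_of_le hkey ?_
            rw [hval2]
            exact hq3'.le
        _ = ε := by ring
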